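/- Let G be a square-free graph. Let K=(K1,K2,K3,L,R) be an optimal good partition of G with K1≠∅ and K3≠∅, let Q=(Q1,Q3,x,y,C1,C3) be a frame for K with C1={c1} and C3={c3}, and let K'=(K1',K2',K3',L',R') be an almost good partition of G such that x∈L'⊆L, y∈R', K1⊆K1'⊆Q1∖Q3, K2=K2'=Q1∩Q3, K3⊆K3'⊆Q3∖Q1, c1 is maximal in K1', and c3 is maximal in K3'. Then: (1) if K' does not satisfy condition (iii) of the definition of a good partition, witnessed by vertices u∈K3' and v∈K1' and a chordless path P=u-u'-...-v'-v of length at least 2, with all interior vertices in L' and containing no vertex complete to K1', in the graph G' obtained from G by deleting the edge uv if it is present, and if P is chosen of minimal length among all such paths, then: if c1 is a neighbor of v' then (K1'∖N(v'))∩K1=∅, and if c1 is not a neighbor of v' then N(v')∩K1=∅; and (2) if K' satisfies condition (iii) but not condition (iv), so that there is an edge between K1' and K3' and some vertex u∈L' has neighbors in both K1' and K3', then N(u)∩K3=∅. -/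

import Mathlib

open SimpleGraph

namespace Paper

variable {V : Type*} {α : Type*}

/-- `S` is complete to `T`: every vertex of `S` is adjacent to every vertex of `T`. -/
def CompleteTo (G : SimpleGraph V) (S T : Set V) : Prop :=
  ∀ ⦃s⦄, s ∈ S → ∀ ⦃t⦄, t ∈ T → G.Adj s t

/-- `S` is anticomplete to `T`: there are no edges between `S` and `T`. -/
def AnticompleteTo (G : SimpleGraph V) (S T : Set V) : Prop :=
  ∀ ⦃s⦄, s ∈ S → ∀ ⦃t⦄, t ∈ T → ¬ G.Adj s t

/-- A vertex `v` is complete to a set `T`. -/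
def VertexCompleteTo (G : SimpleGraph V) (v : V) (T : Set V) : Prop :=
  ∀ ⦃t⦄, t ∈ T → G.Adj v t

/-- `G` has a hole (induced cycle) of length `n`. -/
def HasHole (G : SimpleGraph V) (n : ℕ) : Prop :=
  Nonempty (cycleGraph n ↪g G)

/-- `G` has no hole of odd length. -/
def NoOddHole (G : SimpleGraph V) : Prop :=
  ∀ n, 5 ≤ n → Odd n → ¬ HasHole G n

/-- `G` is Berge: no odd hole, no odd antihole. -/
def IsBerge (G : SimpleGraph V) : Prop :=
  NoOddHole G ∧ NoOddHole Gᶜ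

/-- `G` is square-free: no induced 4-cycle. -/
def SquareFree (G : SimpleGraph V) : Prop := ¬ HasHole G 4

/-- The list `p` of vertices is a chordless (induced) path of `G`. -/
def IsChordlessPath (G : SimpleGraph V) (p : List V) : Prop :=
  p.Chain' G.Adj ∧ p.Nodup ∧
    ∀ i j : Fin p.length, (i : ℕ) + 2 ≤ (j : ℕ) → ¬ G.Adj (p.get i) (p.get j)

/-- The interior vertices of a path given as a list. -/
def interior {β : Type*} (p : List β) : List β := p.tail.dropLast

/-- A triad: a set of three pairwise non-adjacent vertices. -/
def IsTriad (G : SimpleGraph V) (t : Set V) : Prop :=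
  ∃ a b c : V, a ≠ b ∧ a ≠ c ∧ b ≠ c ∧
    ¬ G.Adj a b ∧ ¬ G.Adj a c ∧ ¬ G.Adj b c ∧ t = {a, b, c}

/-- The graph obtained from `G` by deleting all edges between `A` and `B`. -/
def removeBetween (G : SimpleGraph V) (A B : Set V) : SimpleGraph V :=
  G.deleteEdges {e | ∃ x ∈ A, ∃ y ∈ B, e = s(x, y)}

/-- Condition (iii) of a good partition. -/
def Cond3 (G : SimpleGraph V) (K1 K3 L : Set V) : Prop :=
  ∀ (p : List V) (x y : V), IsChordlessPath (removeBetween G K1 K3) p →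
    p.head? = some x → p.getLast? = some y → x ∈ K1 → y ∈ K3 →
    (∀ v ∈ interior p, v ∈ L) →
    ∃ v ∈ p, v ∈ L ∧ VertexCompleteTo G v K1

/-- A good partition of `G`. -/
structure IsGoodPartition (G : SimpleGraph V) (K1 K2 K3 L R : Set V) : Prop where
  cover : K1 ∪ K2 ∪ K3 ∪ L ∪ R = Set.univ
  pdisj : ∀ i j : Fin 5, i ≠ j → Disjoint (![K1, K2, K3, L, R] i) (![K1, K2, K3, L, R] j)
  Lne : L.Nonempty
  Rne : R.Nonempty
  LR_anti : AnticompleteTo G L R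
  clique12 : G.IsClique (K1 ∪ K2)
  clique23 : G.IsClique (K2 ∪ K3)
  cond3 : Cond3 G K1 K3 L
  cond4 : AnticompleteTo G K1 K3 ∨
      ∀ v ∈ L, ¬ ((∃ k ∈ K1, G.Adj v k) ∧ (∃ k ∈ K3, G.Adj v k))
  cond5 : ∃ x ∈ L, ∃ y ∈ R, ∃ t : Set V, IsTriad G t ∧ x ∈ t ∧ y ∈ t

def HasGoodPartition (G : SimpleGraph V) : Prop :=
  ∃ K1 K2 K3 L R : Set V, IsGoodPartition G K1 K2 K3 L R

/-- An induced prism in `G`, with triangle vertices `a i`, `b i` joined by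
the chordless paths `P i`. -/
structure IsPrism (G : SimpleGraph V) (a b : Fin 3 → V) (P : Fin 3 → List V) : Prop where
  chordless : ∀ i, IsChordlessPath G (P i)
  two_le : ∀ i, 2 ≤ (P i).length
  head : ∀ i, (P i).head? = some (a i)
  last : ∀ i, (P i).getLast? = some (b i)
  disj : ∀ i j, i ≠ j → ∀ u ∈ P i, u ∉ P j
  edge_iff : ∀ i j, i ≠ j → ∀ u ∈ P i, ∀ v ∈ P j,
    (G.Adj u v ↔ (u = a i ∧ v = a j) ∨ (u = b i ∧ v = b j))

def ContainsPrism (G : SimpleGraph V) : Prop :=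
  ∃ a b P, IsPrism G a b P

def ContainsEvenPrism (G : SimpleGraph V) : Prop :=
  ∃ a b P, IsPrism G a b P ∧ ∀ i : Fin 3, Even ((P i).length - 1)

def ContainsOddPrism (G : SimpleGraph V) : Prop :=
  ∃ a b P, IsPrism G a b P ∧ ∀ i : Fin 3, Odd ((P i).length - 1)

/-- A rung: a chordless path from `A` to `B` with interior in `C`. -/
def IsRung (G : SimpleGraph V) (A B C : Set V) (p : List V) : Prop :=
  IsChordlessPath G p ∧
    (∃ x, p.head? = some x ∧ x ∈ A) ∧
    (∃ y, p.getLast? = some y ∧ y ∈ B) ∧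
    ∀ v ∈ interior p, v ∈ C

/-- A hyperprism induced in `G`, with nine (pairwise disjoint) pieces `A i`, `C i`, `B i`. -/
structure IsHyperprism (G : SimpleGraph V) (A C B : Fin 3 → Set V) : Prop where
  A_ne : ∀ i, (A i).Nonempty
  B_ne : ∀ i, (B i).Nonempty
  pdisj : ∀ p q : Fin 3 × Fin 3, p ≠ q →
    Disjoint (![A, C, B] p.1 p.2) (![A, C, B] q.1 q.2)
  cross : ∀ i j, i ≠ j → ∀ u ∈ A i ∪ C i ∪ B i, ∀ v ∈ A j ∪ C j ∪ B j,
    (G.Adj u v ↔ (u ∈ A i ∧ v ∈ A j) ∨ (u ∈ B i ∧ v ∈ B j))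
  rung_cover : ∀ i, ∀ v ∈ A i ∪ C i ∪ B i,
    ∃ p, IsRung G (A i) (B i) (C i) p ∧ v ∈ p

/-- The vertex set of a hyperprism. -/
def hypVerts (A C B : Fin 3 → Set V) : Set V := ⋃ i, (A i ∪ C i ∪ B i)

def EvenHyperprism (G : SimpleGraph V) (A C B : Fin 3 → Set V) : Prop :=
  ∀ i p, IsRung G (A i) (B i) (C i) p → Even (p.length - 1)

def OddHyperprism (G : SimpleGraph V) (A C B : Fin 3 → Set V) : Prop :=
  ∀ i p, IsRung G (A i) (B i) (C i) p → Odd (p.length - 1)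

/-- A major neighbor of a hyperprism. -/
def IsMajorNbrHyp (G : SimpleGraph V) (A C B : Fin 3 → Set V) (x : V) : Prop :=
  x ∉ hypVerts A C B ∧
  ∃ (p : Fin 3 → List V) (a b : Fin 3 → V),
    (∀ i, IsRung G (A i) (B i) (C i) (p i) ∧
      (p i).head? = some (a i) ∧ (p i).getLast? = some (b i)) ∧
    (∃ i j, i ≠ j ∧ G.Adj x (a i) ∧ G.Adj x (a j)) ∧
    (∃ i j, i ≠ j ∧ G.Adj x (b i) ∧ G.Adj x (b j))

/-- A local subset of a hyperprism. -/
def HypLocal (A C B : Fin 3 → Set V) (X : Set V) : Prop :=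
  (X ⊆ ⋃ i, A i) ∨ (X ⊆ ⋃ i, B i) ∨ ∃ i, X ⊆ A i ∪ C i ∪ B i

/-- `x` and `y` are consecutive (in this order) in the list `l`. -/
def consecutive {β : Type*} (l : List β) (x y : β) : Prop :=
  ∃ i : ℕ, l[i]? = some x ∧ l[i + 1]? = some y

/-- `H` is a subdivision of `J`, witnessed by the injection `g` of branch vertices and,
for each edge `uv` of `J`, the path `P u v` of `H` replacing that edge. -/
structure IsSubdivisionVia {α' β : Type*} (J : SimpleGraph α') (H : SimpleGraph β)
    (g : α' ↪ β) (P : α' → α' → List β) : Prop where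
  chain : ∀ u v, J.Adj u v → (P u v).Chain' H.Adj
  nodup : ∀ u v, J.Adj u v → (P u v).Nodup
  rev : ∀ u v, J.Adj u v → P v u = (P u v).reverse
  head : ∀ u v, J.Adj u v → (P u v).head? = some (g u)
  last : ∀ u v, J.Adj u v → (P u v).getLast? = some (g v)
  branch : ∀ u v, J.Adj u v → ∀ w : α', g w ∈ P u v → w = u ∨ w = v
  int_disj : ∀ u v w x, J.Adj u v → J.Adj w x → s(u, v) ≠ s(w, x) →
    ∀ z ∈ interior (P u v), z ∉ P w x
  cover : ∀ z : β, (∃ w, g w = z) ∨ ∃ u v, J.Adj u v ∧ z ∈ interior (P u v)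
  edge_iff : ∀ a b : β, H.Adj a b ↔ ∃ u v, J.Adj u v ∧
    (consecutive (P u v) a b ∨ consecutive (P u v) b a)

def IsSubdivision {α' β : Type*} (J : SimpleGraph α') (H : SimpleGraph β) : Prop :=
  ∃ (g : α' ↪ β) (P : α' → α' → List β), IsSubdivisionVia J H g P

/-- The complete graph `K₄`. -/
def K4g : SimpleGraph (Fin 4) := completeGraph (Fin 4)

/-- `G` contains (as an induced subgraph) the line graph of a bipartite subdivision of `J`. -/
def ContainsLineGraphOfBipSubdiv {α' : Type*} (J : SimpleGraph α') (G : SimpleGraph V) : Prop :=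
  ∃ (β : Type) (H : SimpleGraph β), IsSubdivision J H ∧ H.Colorable 2 ∧
    Nonempty (H.lineGraph ↪g G)

/-- The set `W` induces in `G` the line graph of a bipartite subdivision of `J`. -/
def InducesLineGraphOfBipSubdiv {α' : Type*} (J : SimpleGraph α') (G : SimpleGraph V)
    (W : Set V) : Prop :=
  ∃ (β : Type) (H : SimpleGraph β), IsSubdivision J H ∧ H.Colorable 2 ∧
    Nonempty (H.lineGraph ≃g G.induce W)

/-- A (finite) graph is 3-connected. -/
def ThreeConnected {α' : Type*} [Fintype α'] (J : SimpleGraph α') : Prop :=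
  4 ≤ Fintype.card α' ∧ ∀ s : Set α', Nat.card s ≤ 2 → (J.induce sᶜ).Connected

/-- `J'` is an enlargement of `J`. -/
def IsEnlargement {α' α'' : Type*} [Fintype α''] (J : SimpleGraph α')
    (J' : SimpleGraph α'') : Prop :=
  ThreeConnected J' ∧ ∃ s : Set α'', s ≠ Set.univ ∧
    ∃ (β : Type) (H : SimpleGraph β), IsSubdivision J H ∧ Nonempty (H ≃g J'.induce s)

/-- The appearance of `J` given by the subdivision data `(H, g)` is degenerate. -/
def IsDegenerateVia {α' β : Type*} (J : SimpleGraph α') (H : SimpleGraph β)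
    (g : α' ↪ β) : Prop :=
  (Nonempty (J ≃g completeGraph (Fin 4)) ∧
    ∃ a b c d : α', [a, b, c, d].Nodup ∧
      H.Adj (g a) (g b) ∧ H.Adj (g b) (g c) ∧ H.Adj (g c) (g d) ∧ H.Adj (g d) (g a)) ∨
  (Nonempty (J ≃g completeBipartiteGraph (Fin 3) (Fin 3)) ∧ Nonempty (H ≃g J))

/-- `J` has a non-degenerate appearance in `G`. -/
def HasNondegenerateAppearance {α' : Type*} (J : SimpleGraph α') (G : SimpleGraph V) : Prop :=
  ∃ (β : Type) (H : SimpleGraph β) (g : α' ↪ β) (P : α' → α' → List β),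
    IsSubdivisionVia J H g P ∧ H.Colorable 2 ∧ ¬ IsDegenerateVia J H g ∧
    Nonempty (H.lineGraph ↪g G)

/-- A `uv`-rung of a strip system. -/
def IsStripRung (G : SimpleGraph V) (S : α → α → Set V) (N : α → Set V)
    (u v : α) (p : List V) : Prop :=
  IsChordlessPath G p ∧ (∀ z ∈ p, z ∈ S u v) ∧
    (∃ a, p.head? = some a ∧ a ∈ N u ∧ ∀ z ∈ p, z ∈ N u → z = a) ∧
    (∃ b, p.getLast? = some b ∧ b ∈ N v ∧ ∀ z ∈ p, z ∈ N v → z = b)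

/-- The vertex set `V(S,N)` of a strip system. -/
def stripVerts (J : SimpleGraph α) (S : α → α → Set V) : Set V :=
  {z | ∃ u v, J.Adj u v ∧ z ∈ S u v}

/-- A `J`-strip system `(S,N)` in `G`. -/
structure IsStripSystem {α' : Type*} (J : SimpleGraph α') (G : SimpleGraph V)
    (S : α' → α' → Set V) (N : α' → Set V) : Prop where
  S_symm : ∀ u v, S u v = S v u
  S_empty : ∀ u v, ¬ J.Adj u v → S u v = ∅
  S_disj : ∀ u v w x, J.Adj u v → J.Adj w x → s(u, v) ≠ s(w, x) →
    Disjoint (S u v) (S w x)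
  N_sub : ∀ u, N u ⊆ {z | ∃ v, J.Adj u v ∧ z ∈ S u v}
  rung_cover : ∀ u v, J.Adj u v → ∀ z ∈ S u v,
    ∃ p, IsStripRung G S N u v p ∧ z ∈ p
  far_anti : ∀ u v w x, J.Adj u v → J.Adj w x → u ≠ w → u ≠ x → v ≠ w → v ≠ x →
    AnticompleteTo G (S u v) (S w x)
  fork : ∀ u v w, J.Adj u v → J.Adj u w → v ≠ w →
    ∀ a ∈ S u v, ∀ b ∈ S u w, (G.Adj a b ↔ a ∈ N u ∧ b ∈ N u)
  parity : ∃ R : Sym2 α' → List V,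
    (∀ u v, J.Adj u v →
      IsStripRung G S N u v (R s(u, v)) ∨ IsStripRung G S N v u (R s(u, v))) ∧
    ∀ (u : α') (c : J.Walk u u), c.IsCycle →
      ((c.edges.map fun e => (R e).length - 1).sum % 2 = c.length % 2)

/-- `X` saturates, where `Nuv u v` plays the role of `N_uv`. -/
def SaturatesOn (J : SimpleGraph α) (Nuv : α → α → Set V) (X : Set V) : Prop :=
  ∀ u v w, J.Adj u v → J.Adj u w → ¬ (Nuv u v ⊆ X) → ¬ (Nuv u w ⊆ X) → v = w

/-- `x` is major with respect to the strip system `(S,N)`. -/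
def IsMajorStrip (J : SimpleGraph α) (G : SimpleGraph V)
    (S : α → α → Set V) (N : α → Set V) (x : V) : Prop :=
  x ∉ stripVerts J S ∧ SaturatesOn J (fun u v => S u v ∩ N u) (G.neighborSet x)

/-- `R` is a choice of rungs of the strip system `(S,N)`. -/
def IsChoiceOfRungs (J : SimpleGraph α) (G : SimpleGraph V)
    (S : α → α → Set V) (N : α → Set V) (R : Sym2 α → List V) : Prop :=
  ∀ u v, J.Adj u v →
    IsStripRung G S N u v (R s(u, v)) ∨ IsStripRung G S N v u (R s(u, v))

/-- `x` is major with respect to the choice of rungs `R`. -/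
def IsMajorOnChoice (J : SimpleGraph α) (G : SimpleGraph V)
    (S : α → α → Set V) (N : α → Set V) (R : Sym2 α → List V) (x : V) : Prop :=
  x ∉ stripVerts J S ∧
  SaturatesOn J (fun u v => {z | z ∈ R s(u, v)} ∩ N u) (G.neighborSet x)

/-- A local subset of a strip system. -/
def StripLocal (J : SimpleGraph α) (S : α → α → Set V) (N : α → Set V)
    (X : Set V) : Prop :=
  (∃ u, X ⊆ N u) ∨ ∃ u v, J.Adj u v ∧ X ⊆ S u v

/-- Some choice of rungs of the `K₄`-strip system yields a degenerate appearance of `K₄`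
(the four branch vertices form a square, i.e. some 4-cycle of rungs are all single vertices). -/
def ChoiceYieldsDegenerateK4 (J : SimpleGraph α) (G : SimpleGraph V)
    (S : α → α → Set V) (N : α → Set V) : Prop :=
  ∃ R, IsChoiceOfRungs J G S N R ∧ ∃ a b c d : α, [a, b, c, d].Nodup ∧
    J.Adj a b ∧ J.Adj b c ∧ J.Adj c d ∧ J.Adj d a ∧
    (R s(a, b)).length = 1 ∧ (R s(b, c)).length = 1 ∧
    (R s(c, d)).length = 1 ∧ (R s(d, a)).length = 1

/-- The set `O_ij` for a `K₄`-strip system. -/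
def OsetK4 (G : SimpleGraph V) (S : Fin 4 → Fin 4 → Set V) (N : Fin 4 → Set V)
    (i j : Fin 4) : Set V :=
  {x | x ∉ stripVerts K4g S ∧
    (∀ y ∈ (N i ∪ N j) \ S i j, G.Adj x y) ∧
    (∀ y ∈ stripVerts K4g S \ (N i ∪ N j ∪ S i j), ¬ G.Adj x y)}

/-- A special `K₄`-strip system (vertices of `K₄` are `0,1,2,3`, standing for `1,2,3,4`). -/
structure IsSpecialK4StripSystem (G : SimpleGraph V)
    (S : Fin 4 → Fin 4 → Set V) (N : Fin 4 → Set V) : Prop where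
  strip : IsStripSystem K4g G S N
  a13 : S 0 2 ⊆ N 0 ∧ S 0 2 ⊆ N 2
  a24 : S 1 3 ⊆ N 1 ∧ S 1 3 ⊆ N 3
  b12 : ∀ p, IsStripRung G S N 0 1 p → Even (p.length - 1) ∧ 3 ≤ p.length
  b34 : ∀ p, IsStripRung G S N 2 3 p → Even (p.length - 1) ∧ 3 ≤ p.length
  b14 : ∀ p, IsStripRung G S N 0 3 p → Odd (p.length - 1) ∧ 4 ≤ p.length
  b23 : ∀ p, IsStripRung G S N 1 2 p → Odd (p.length - 1) ∧ 4 ≤ p.length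
  c_ne12 : (OsetK4 G S N 0 1).Nonempty
  c_ne34 : (OsetK4 G S N 2 3).Nonempty
  c_comp : CompleteTo G (OsetK4 G S N 0 1) (OsetK4 G S N 2 3)
  majors : ∀ x ∉ stripVerts K4g S ∪ OsetK4 G S N 0 1 ∪ OsetK4 G S N 2 3,
      (∃ R, IsChoiceOfRungs K4g G S N R ∧ IsMajorOnChoice K4g G S N R x) →
      IsMajorStrip K4g G S N x
  e_app : ¬ ∃ (α'' : Type) (_ : Fintype α'') (J' : SimpleGraph α'') (W : Set V),
      IsEnlargement K4g J' ∧ stripVerts K4g S ⊆ W ∧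
      Disjoint W (OsetK4 G S N 0 1 ∪ OsetK4 G S N 2 3) ∧
      InducesLineGraphOfBipSubdiv J' G W
  e_max : ¬ ∃ (S' : Fin 4 → Fin 4 → Set V) (N' : Fin 4 → Set V),
      IsStripSystem K4g G S' N' ∧
      Disjoint (stripVerts K4g S') (OsetK4 G S N 0 1 ∪ OsetK4 G S N 2 3) ∧
      stripVerts K4g S ⊂ stripVerts K4g S'

/-- An almost good partition: conditions (i), (ii) and (v) of a good partition. -/
structure IsAlmostGoodPartition (G : SimpleGraph V) (K1 K2 K3 L R : Set V) : Prop where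
  cover : K1 ∪ K2 ∪ K3 ∪ L ∪ R = Set.univ
  pdisj : ∀ i j : Fin 5, i ≠ j → Disjoint (![K1, K2, K3, L, R] i) (![K1, K2, K3, L, R] j)
  Lne : L.Nonempty
  Rne : R.Nonempty
  LR_anti : AnticompleteTo G L R
  clique12 : G.IsClique (K1 ∪ K2)
  clique23 : G.IsClique (K2 ∪ K3)
  cond5 : ∃ x ∈ L, ∃ y ∈ R, ∃ t : Set V, IsTriad G t ∧ x ∈ t ∧ y ∈ t

/-- An optimal good partition. -/
def IsOptimalGoodPartition (G : SimpleGraph V) (K1 K2 K3 L R : Set V) : Prop :=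
  IsGoodPartition G K1 K2 K3 L R ∧
    ¬ ∃ K1' K2' K3' L' R' : Set V, IsGoodPartition G K1' K2' K3' L' R' ∧
      (K2 ⊂ K2' ∨ (K2 = K2' ∧ K3 ⊂ K3'))

/-- `c` is a maximal vertex of `K`: its neighborhood in `other` contains that of
every other vertex of `K`. -/
def IsMaxVert (G : SimpleGraph V) (other K : Set V) (c : V) : Prop :=
  c ∈ K ∧ ∀ d ∈ K, ∀ z ∈ other, G.Adj d z → G.Adj c z

/-- A frame in `G`. -/
structure IsFrame (G : SimpleGraph V) (Q1 Q3 : Set V) (x y : V) (C1 C3 : Set V) : Prop where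
  xy_ne : x ≠ y
  xy_triad : ∃ t : Set V, IsTriad G t ∧ x ∈ t ∧ y ∈ t
  Q1_cl : G.IsClique Q1
  Q1_x : x ∉ Q1
  Q1_y : y ∉ Q1
  Q1_max : ∀ Q : Set V, G.IsClique Q → x ∉ Q → y ∉ Q → Q1 ⊆ Q → Q = Q1
  Q3_cl : G.IsClique Q3
  Q3_x : x ∉ Q3
  Q3_y : y ∉ Q3
  Q3_max : ∀ Q : Set V, G.IsClique Q → x ∉ Q → y ∉ Q → Q3 ⊆ Q → Q = Q3
  C1_sub : C1 ⊆ Q1 \ Q3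
  C3_sub : C3 ⊆ Q3 \ Q1
  C1_small : C1.Subsingleton
  C3_small : C3.Subsingleton

/-- A frame for a good partition. -/
structure IsFrameFor (G : SimpleGraph V) (Q1 Q3 : Set V) (x y : V) (C1 C3 : Set V)
    (K1 K2 K3 L R : Set V) : Prop where
  frame : IsFrame G Q1 Q3 x y C1 C3
  K1_sub : K1 ⊆ Q1 \ Q3
  K2_eq : K2 = Q1 ∩ Q3
  K3_sub : K3 ⊆ Q3 \ Q1
  xL : x ∈ L
  yR : y ∈ R
  C1_spec : (K1 = ∅ → C1 = ∅) ∧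
    (K1 ≠ ∅ → ∃ c1, C1 = {c1} ∧ IsMaxVert G (Q3 \ Q1) K1 c1)
  C3_spec : (K3 = ∅ → C3 = ∅) ∧
    (K3 ≠ ∅ → ∃ c3, C3 = {c3} ∧ IsMaxVert G (Q1 \ Q3) K3 c3)


private lemma chain'_getElem {R : V → V → Prop} {l : List V} :
    l.Chain' R ↔ ∀ (i : ℕ) (h : i + 1 < l.length), R (l[i]'(by omega)) (l[i+1]'h) := by
  exact List.isChain_iff_getElem

private lemma getElem_mem_interior (l : List V) (i : ℕ) (h1 : 1 ≤ i) (h2 : i + 1 < l.length) :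
    l[i]'(by omega) ∈ interior l := by
  unfold interior
  rw [List.mem_iff_getElem]
  refine ⟨i - 1, by simp [List.length_dropLast, List.length_tail]; omega, ?_⟩
  rw [List.getElem_dropLast, List.getElem_tail]
  congr 1
  omega

private lemma mem_interior_getElem {l : List V} {w : V} (hw : w ∈ interior l) :
    ∃ (i : ℕ) (h : i + 1 < l.length), 1 ≤ i ∧ l[i]'(by omega) = w := by
  unfold interior at hw
  rw [List.mem_iff_getElem] at hw
  obtain ⟨t, ht, hte⟩ := hw
  have htl : t + 1 + 1 < l.length := by
    simp [List.length_dropLast, List.length_tail] at ht; omega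
  refine ⟨t + 1, htl, by omega, ?_⟩
  rw [← hte, List.getElem_dropLast, List.getElem_tail]

private lemma getElem_congr_idx (l : List V) {i j : ℕ} (h : i = j) (hj : j < l.length) :
    l[i]'(h ▸ hj) = l[j]'hj := by subst h; rfl

set_option maxHeartbeats 1000000 in
/-- the main step of the frame-refinement algorithm. -/
theorem frame_refinement_main_step
    {V : Type*} (G : SimpleGraph V) (hsf : SquareFree G)
    (K1 K2 K3 L R : Set V) (hopt : IsOptimalGoodPartition G K1 K2 K3 L R)
    (hK1ne : K1.Nonempty) (hK3ne : K3.Nonempty)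
    (Q1 Q3 : Set V) (x y : V) (c1 c3 : V)
    (hframe : IsFrameFor G Q1 Q3 x y {c1} {c3} K1 K2 K3 L R)
    (K1' K2' K3' L' R' : Set V)
    (hagp : IsAlmostGoodPartition G K1' K2' K3' L' R')
    (hxL' : x ∈ L') (hL'L : L' ⊆ L) (hyR' : y ∈ R')
    (hK1'lo : K1 ⊆ K1') (hK1'hi : K1' ⊆ Q1 \ Q3)
    (hK2'eq : K2 = K2') (hK2'val : K2' = Q1 ∩ Q3)
    (hK3'lo : K3 ⊆ K3') (hK3'hi : K3' ⊆ Q3 \ Q1)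
    (hc1 : IsMaxVert G (Q3 \ Q1) K1' c1)
    (hc3 : IsMaxVert G (Q1 \ Q3) K3' c3) :
    (∀ (u v v' : V) (p : List V), u ∈ K3' → v ∈ K1' →
      IsChordlessPath (G.deleteEdges {s(u, v)}) p →
      p.head? = some u → p.getLast? = some v → 3 ≤ p.length →
      (∀ w ∈ interior p, w ∈ L') →
      (∀ w ∈ p, ¬ VertexCompleteTo G w K1') →
      (∀ (u2 v2 : V) (q : List V), u2 ∈ K3' → v2 ∈ K1' →
        IsChordlessPath (G.deleteEdges {s(u2, v2)}) q →
        q.head? = some u2 → q.getLast? = some v2 → 3 ≤ q.length →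
        (∀ w ∈ interior q, w ∈ L') →
        (∀ w ∈ q, ¬ VertexCompleteTo G w K1') → p.length ≤ q.length) →
      p.dropLast.getLast? = some v' →
      ((G.Adj c1 v' → (K1' \ {z | G.Adj v' z}) ∩ K1 = ∅) ∧
       (¬ G.Adj c1 v' → {z | z ∈ K1 ∧ G.Adj v' z} = ∅))) ∧
    (Cond3 G K1' K3' L' →
      (∃ a ∈ K1', ∃ b ∈ K3', G.Adj a b) →
      ∀ u ∈ L', (∃ a ∈ K1', G.Adj u a) → (∃ b ∈ K3', G.Adj u b) →
      ∀ b ∈ K3, ¬ G.Adj u b) := by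
  classical
  obtain ⟨hgp, -⟩ := hopt
  -- basic membership facts
  have hc1K1 : c1 ∈ K1 := by
    obtain ⟨c1', he, hm⟩ := hframe.C1_spec.2 hK1ne.ne_empty
    have h1 : c1 ∈ ({c1'} : Set V) := by rw [← he]; exact rfl
    rw [Set.mem_singleton_iff] at h1
    rw [h1]; exact hm.1
  have hc3K3 : c3 ∈ K3 := by
    obtain ⟨c3', he, hm⟩ := hframe.C3_spec.2 hK3ne.ne_empty
    have h1 : c3 ∈ ({c3'} : Set V) := by rw [← he]; exact rfl
    rw [Set.mem_singleton_iff] at h1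
    rw [h1]; exact hm.1
  -- disjointness facts
  have dK1L : ∀ {z : V}, z ∈ K1 → z ∉ L := fun hz =>
    Set.disjoint_left.mp (by simpa using hgp.pdisj 0 3 (by decide)) hz
  have dK3L : ∀ {z : V}, z ∈ K3 → z ∉ L := fun hz =>
    Set.disjoint_left.mp (by simpa using hgp.pdisj 2 3 (by decide)) hz
  have dK1K3 : ∀ {z : V}, z ∈ K1 → z ∉ K3 := fun hz =>
    Set.disjoint_left.mp (by simpa using hgp.pdisj 0 2 (by decide)) hz
  have dK1'L' : ∀ {z : V}, z ∈ K1' → z ∉ L' := fun hz =>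
    Set.disjoint_left.mp (by simpa using hagp.pdisj 0 3 (by decide)) hz
  have dK3'L' : ∀ {z : V}, z ∈ K3' → z ∉ L' := fun hz =>
    Set.disjoint_left.mp (by simpa using hagp.pdisj 2 3 (by decide)) hz
  have dK1'K3' : ∀ {z : V}, z ∈ K1' → z ∉ K3' := fun hz =>
    Set.disjoint_left.mp (by simpa using hagp.pdisj 0 2 (by decide)) hz
  constructor
  · intro u v v' p huK3' hvK1' hchord hhead hlast hlen3 hintL' hnocomp hmin hv'last
    obtain ⟨hchain, hnodup, hchordfn⟩ := hchord
    have h0lt : 0 < p.length := by omega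
    have hp0 : p[0]'h0lt = u := by
      have h := hhead
      rw [List.head?_eq_getElem?, List.getElem?_eq_getElem h0lt] at h
      exact Option.some_injective _ h
    have hplast : p[p.length - 1]'(by omega) = v := by
      have h := hlast
      rw [List.getLast?_eq_getElem?,
        List.getElem?_eq_getElem (show p.length - 1 < p.length by omega)] at h
      exact Option.some_injective _ h
    have hdl : p.dropLast.length = p.length - 1 := List.length_dropLast
    have hpv' : p[p.length - 2]'(by omega) = v' := by
      have h := hv'last
      rw [List.getLast?_eq_getElem?,
        List.getElem?_eq_getElem (show p.dropLast.length - 1 < p.dropLast.length by omega)] at h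
      have h2 := Option.some_injective _ h
      rw [List.getElem_dropLast] at h2
      rw [← h2]
      congr 1
      omega
    have hGle : ∀ {s t : V}, (G.deleteEdges {s(u,v)}).Adj s t → G.Adj s t :=
      fun h => (SimpleGraph.deleteEdges_le _) h
    have hedge : ∀ (i : ℕ) (h : i + 1 < p.length), G.Adj (p[i]'(by omega)) (p[i+1]'h) := by
      intro i h
      exact hGle (chain'_getElem.mp hchain i h)
    have hGnadj : ∀ (i j : ℕ) (hj : j < p.length) (hij : i + 2 ≤ j)
        (hn0 : ¬(i = 0 ∧ j = p.length - 1)), ¬ G.Adj (p[i]'(by omega)) (p[j]'hj) := by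
      intro i j hj hij hn0 hadj
      refine hchordfn ⟨i, by omega⟩ ⟨j, hj⟩ (by simpa using hij) ?_
      simp only [List.get_eq_getElem]
      rw [SimpleGraph.deleteEdges_adj]
      refine ⟨hadj, ?_⟩
      rw [Set.mem_singleton_iff, Sym2.eq_iff]
      rintro (⟨h1, h2⟩ | ⟨h1, h2⟩)
      · rw [← hp0] at h1
        rw [← hplast] at h2
        exact hn0 ⟨hnodup.getElem_inj_iff.mp h1, by
          have := hnodup.getElem_inj_iff.mp h2; omega⟩
      · rw [← hplast] at h1
        rw [← hp0] at h2
        have e1 := hnodup.getElem_inj_iff.mp h1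
        have e2 := hnodup.getElem_inj_iff.mp h2
        omega
    have hintp : ∀ (i : ℕ) (h : i + 1 < p.length), 1 ≤ i → (p[i]'(by omega)) ∈ L' :=
      fun i h h1 => hintL' _ (getElem_mem_interior p i h1 h)
    -- Minimality lemma: no vertex of K1' has a neighbor among the interior vertices
    -- of p other than possibly v'.
    have ML : ∀ z ∈ K1', ∀ (i : ℕ) (h3 : i + 3 ≤ p.length), 1 ≤ i →
        ¬ G.Adj z (p[i]'(by omega)) := by
      intro z hzK1' i h3 h1 hadj
      by_cases hzv : z = v
      · subst hzv
        refine hGnadj i (p.length - 1) (by omega) (by omega) (by omega) ?_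
        rw [hplast]
        exact hadj.symm
      have hznp : z ∉ p := by
        intro hzp
        rw [List.mem_iff_getElem] at hzp
        obtain ⟨t, ht, hte⟩ := hzp
        rcases Nat.eq_zero_or_pos t with rfl | ht1
        · have hzu : z = u := by rw [← hte]; exact hp0
          exact dK1'K3' hzK1' (by rw [hzu]; exact huK3')
        rcases eq_or_lt_of_le (show t + 1 ≤ p.length from ht) with ht2 | ht2
        · refine hzv ?_
          rw [← hte, ← hplast]
          congr 1
          omega
        · exact dK1'L' hzK1' (by rw [← hte]; exact hintp t ht2 ht1)
      have hex : ∃ jj : ℕ, 1 ≤ jj ∧ ∃ h : jj + 2 ≤ p.length, G.Adj z (p[jj]'(by omega)) :=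
        ⟨i, h1, by omega, hadj⟩
      obtain ⟨hj1, hjb, hjadj⟩ := Nat.find_spec hex
      set j := Nat.find hex with hjdef
      have hjle : j ≤ i := Nat.find_le ⟨h1, by omega, hadj⟩
      set q : List V := p.take (j+1) ++ [z] with hq
      have htl : (p.take (j+1)).length = j + 1 := by
        rw [List.length_take]; omega
      have hql : q.length = j + 2 := by
        rw [hq, List.length_append, htl]; rfl
      have hqget : ∀ (t : ℕ) (ht : t < j + 1), q[t]'(by rw [hql]; omega) = p[t]'(by omega) := by
        intro t ht
        simp only [hq]
        rw [List.getElem_append_left (by rw [htl]; omega)]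
        exact List.getElem_take
      have hqlastget : q[j+1]'(by rw [hql]; omega) = z := by
        simp only [hq]
        exact List.getElem_concat_length (by rw [htl]) _
      have hqchain : q.Chain' (G.deleteEdges {s(u, z)}).Adj := by
        rw [chain'_getElem]
        intro t ht
        rw [hql] at ht
        by_cases htj : t + 1 < j + 1
        · rw [hqget t (by omega), hqget (t+1) (by omega)]
          rw [SimpleGraph.deleteEdges_adj]
          refine ⟨hedge t (by omega), ?_⟩
          rw [Set.mem_singleton_iff, Sym2.eq_iff]
          rintro (⟨h1', h2'⟩ | ⟨h1', h2'⟩)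
          · exact hznp (h2' ▸ List.getElem_mem _)
          · exact hznp (h1' ▸ List.getElem_mem _)
        · have htt : t = j := by omega
          simp only [htt]
          rw [hqget j (by omega), hqlastget]
          rw [SimpleGraph.deleteEdges_adj]
          refine ⟨hjadj.symm, ?_⟩
          rw [Set.mem_singleton_iff, Sym2.eq_iff]
          rintro (⟨h1', h2'⟩ | ⟨h1', h2'⟩)
          · rw [← hp0] at h1'
            have := hnodup.getElem_inj_iff.mp h1'
            omega
          · exact hznp (h1' ▸ List.getElem_mem _)
      have hqnodup : q.Nodup := by
        rw [hq, List.nodup_append]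
        refine ⟨(List.take_sublist _ _).nodup hnodup, List.nodup_singleton z, ?_⟩
        intro w hw hwz' hwz hwe
        rw [List.mem_singleton] at hwz
        subst hwz
        subst hwe
        exact hznp (List.take_subset _ _ hw)
      have hqchord : ∀ s t : Fin q.length, (s:ℕ) + 2 ≤ (t:ℕ) →
          ¬ (G.deleteEdges {s(u,z)}).Adj (q.get s) (q.get t) := by
        intro s t hst
        have hs : (s:ℕ) < j + 2 := by rw [← hql]; exact s.isLt
        have ht : (t:ℕ) < j + 2 := by rw [← hql]; exact t.isLt
        simp only [List.get_eq_getElem]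
        by_cases htj : (t:ℕ) < j + 1
        · rw [hqget s (by omega), hqget t (by omega)]
          intro hadj2
          exact hGnadj s t (by omega) (by omega) (by omega)
            ((SimpleGraph.deleteEdges_le _) hadj2)
        · have htt : (t:ℕ) = j + 1 := by omega
          simp only [htt]
          rw [hqget s (by omega), hqlastget]
          rcases Nat.eq_zero_or_pos (s:ℕ) with hs0 | hs1
          · simp only [hs0]
            rw [hp0]
            intro hadj2
            rw [SimpleGraph.deleteEdges_adj] at hadj2
            exact hadj2.2 rfl
          · intro hadj2
            have hlt : (s:ℕ) < j := by omega
            exact (Nat.find_min hex hlt) ⟨hs1, by omega,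
              ((SimpleGraph.deleteEdges_le _) hadj2).symm⟩
      have hqhead : q.head? = some u := by
        rw [List.head?_eq_getElem?, List.getElem?_eq_getElem (show 0 < q.length by rw [hql]; omega)]
        rw [hqget 0 (by omega), hp0]
      have hqlast : q.getLast? = some z := by
        simp only [hq]
        exact List.getLast?_concat
      have hqint : ∀ w ∈ interior q, w ∈ L' := by
        intro w hw
        obtain ⟨t, htb, ht1, hte⟩ := mem_interior_getElem hw
        rw [hql] at htb
        rw [hqget t (by omega)] at hte
        rw [← hte]
        exact hintp t (by omega) ht1
      have hqnc : ∀ w ∈ q, ¬ VertexCompleteTo G w K1' := by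
        intro w hw
        rw [hq, List.mem_append] at hw
        rcases hw with hw | hw
        · exact hnocomp w (List.take_subset _ _ hw)
        · rw [List.mem_singleton] at hw
          subst hw
          intro hcomp
          exact G.irrefl (hcomp hzK1')
      have hfin := hmin u z q huK3' hzK1' ⟨hqchain, hqnodup, hqchord⟩ hqhead hqlast
        (by omega) hqint hqnc
      rw [hql] at hfin
      omega
    -- basic facts
    have huQ3 : u ∈ Q3 := (hK3'hi huK3').1
    -- the contradiction when the interior vertex complete to K1 is p[0]
    have UBRANCH : ∀ c ∈ K3, G.Adj (p[0]'h0lt) c → (p[0]'h0lt) ∈ L →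
        VertexCompleteTo G (p[0]'h0lt) K1 → False := by
      intro c hcK3 hpc hpL hcomp
      have huc1 : G.Adj u c1 := by rw [← hp0]; exact hcomp hc1K1
      have hc3c1 : G.Adj c3 c1 := hc3.2 u huK3' c1 (hK1'hi (hK1'lo hc1K1)) huc1
      rcases hgp.cond4 with hanti | hloc
      · exact hanti hc1K1 hc3K3 hc3c1.symm
      · exact hloc u (by rw [← hp0]; exact hpL)
          ⟨⟨c1, hc1K1, huc1⟩, ⟨c, hcK3, by rw [← hp0]; exact hpc⟩⟩
    have hHadj_of : ∀ {s t : V}, G.Adj s t → (s ∈ L ∨ t ∈ L) →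
        (removeBetween G K1 K3).Adj s t := by
      intro s t hst hL0
      unfold removeBetween
      rw [SimpleGraph.deleteEdges_adj]
      refine ⟨hst, ?_⟩
      rintro ⟨x1, hx1, y1, hy1, hse⟩
      rw [Sym2.eq_iff] at hse
      rcases hse with ⟨rfl, rfl⟩ | ⟨rfl, rfl⟩ <;> rcases hL0 with h | h
      · exact dK1L hx1 h
      · exact dK3L hy1 h
      · exact dK3L hy1 h
      · exact dK1L hx1 h
    have hHnadj : ∀ {s t : V}, s ∈ K1 → t ∈ K3 → ¬ (removeBetween G K1 K3).Adj s t := by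
      intro s t hs ht hadj
      unfold removeBetween at hadj
      rw [SimpleGraph.deleteEdges_adj] at hadj
      exact hadj.2 ⟨s, hs, t, ht, rfl⟩
    have hHle : ∀ {s t : V}, (removeBetween G K1 K3).Adj s t → G.Adj s t :=
      fun h => (SimpleGraph.deleteEdges_le _) h
    -- THE KEY CLAIM
    have KEY : ∀ a ∈ K1, G.Adj a v' → ∀ bad ∈ K1, ¬ G.Adj bad v' → False := by
      intro a haK1 haav' bad hbadK1 hbadnv'
      have LP : ∀ (c : V) (k : ℕ) (hcK3 : c ∈ K3) (hk : k + 2 ≤ p.length)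
          (hadjkc : G.Adj (p[k]'(by omega)) c)
          (hno : ∀ (jj : ℕ) (hjj : jj + 2 ≤ p.length), k < jj → ¬ G.Adj c (p[jj]'(by omega)))
          (hL3 : ∀ (jj : ℕ) (hjj : jj + 2 ≤ p.length), k ≤ jj → (p[jj]'(by omega)) ∈ L)
          (h00 : k = 0 → ¬ G.Adj a (p[0]'h0lt) ∧ c ≠ p[0]'h0lt), False := by
        intro c k hcK3 hk hadjkc hno hL3 h00
        set M : List V := ((p.drop k).dropLast).reverse with hM
        have hMlen : M.length = p.length - k - 1 := by
          rw [hM]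
          simp
        have hMget : ∀ (jj : ℕ) (h : jj < M.length), M[jj]'h = p[p.length - 2 - jj]'(by omega) := by
          intro jj h
          have h' : jj < p.length - k - 1 := by omega
          simp only [hM]
          rw [List.getElem_reverse, List.getElem_dropLast, List.getElem_drop]
          congr 1
          simp
          omega
        set W : List V := a :: (M ++ [c]) with hW
        have hWlen : W.length = M.length + 2 := by
          rw [hW]; simp
        have hW0 : W[0]'(by omega) = a := by simp only [hW]; rfl
        have hWmid : ∀ (i : ℕ) (h1 : 1 ≤ i) (h2 : i ≤ M.length),
            W[i]'(by omega) = p[p.length - 1 - i]'(by omega) := by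
          intro i h1 h2
          obtain ⟨t, rfl⟩ : ∃ t, i = t + 1 := ⟨i - 1, by omega⟩
          simp only [hW]
          rw [List.getElem_cons_succ, List.getElem_append_left (by omega),
            hMget t (by omega)]
          congr 1
          omega
        have hWlast : W[M.length + 1]'(by omega) = c := by
          simp only [hW]
          rw [List.getElem_cons_succ]
          exact List.getElem_concat_length rfl _
        have hWchain : W.Chain' (removeBetween G K1 K3).Adj := by
          rw [chain'_getElem]
          intro i hi
          rw [hWlen] at hi
          rcases Nat.eq_zero_or_pos i with rfl | hi1
          · rw [hW0, hWmid 1 le_rfl (by omega)]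
            refine hHadj_of ?_ (Or.inr (hL3 (p.length - 1 - 1) (by omega) (by omega)))
            rw [getElem_congr_idx p (show p.length - 1 - 1 = p.length - 2 by omega) (by omega),
              hpv']
            exact haav'
          rcases Nat.lt_or_ge i M.length with hiM | hiM
          · rw [hWmid i hi1 (by omega), hWmid (i+1) (by omega) (by omega)]
            refine hHadj_of ?_ (Or.inr (hL3 _ (by omega) (by omega)))
            have hED := hedge (p.length - 1 - (i+1)) (by omega)
            rw [getElem_congr_idx p (show p.length - 1 - (i+1) + 1 = p.length - 1 - i by omega)
              (by omega)] at hED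
            exact hED.symm
          · have hii : i = M.length := by omega
            simp only [hii]
            rw [hWmid M.length (by omega) le_rfl, hWlast]
            refine hHadj_of ?_ (Or.inl (hL3 _ (by omega) (by omega)))
            rw [getElem_congr_idx p (show p.length - 1 - M.length = k by omega) (by omega)]
            exact hadjkc
        have hWnodup : W.Nodup := by
          refine List.pairwise_iff_getElem.mpr ?_
          intro i j hi hj hij
          rw [hWlen] at hi hj
          rcases Nat.eq_zero_or_pos i with rfl | hi1
          · rw [hW0]
            rcases Nat.lt_or_ge j (M.length + 1) with hjM | hjM
            · rw [hWmid j (by omega) (by omega)]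
              intro heq
              rcases Nat.eq_zero_or_pos (p.length - 1 - j) with he0 | he1
              · have hau2 : a = u := by
                  rw [heq, getElem_congr_idx p he0 (by omega)]
                  exact hp0
                exact dK1'K3' (hK1'lo haK1) (by rw [hau2]; exact huK3')
              · exact dK1'L' (hK1'lo haK1)
                  (by rw [heq]; exact hintp (p.length - 1 - j) (by omega) he1)
            · have hjj : j = M.length + 1 := by omega
              subst hjj
              rw [hWlast]
              exact fun h => dK1K3 haK1 (h ▸ hcK3)
          rcases Nat.lt_or_ge j (M.length + 1) with hjM | hjM
          · rw [hWmid i hi1 (by omega), hWmid j (by omega) (by omega)]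
            intro heq
            have := hnodup.getElem_inj_iff.mp heq
            omega
          · have hjj : j = M.length + 1 := by omega
            subst hjj
            rw [hWmid i hi1 (by omega), hWlast]
            rcases Nat.eq_zero_or_pos (p.length - 1 - i) with he0 | he1
            · have hk0 : k = 0 := by omega
              intro heq
              refine (h00 hk0).2 ?_
              rw [← heq, getElem_congr_idx p he0 (by omega)]
            · intro heq
              exact dK3'L' (hK3'lo hcK3)
                (by rw [← heq]; exact hintp (p.length - 1 - i) (by omega) he1)
        have hWchord : ∀ s t : Fin W.length, (s:ℕ) + 2 ≤ (t:ℕ) →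
            ¬ (removeBetween G K1 K3).Adj (W.get s) (W.get t) := by
          intro s t hst
          have hs : (s:ℕ) < M.length + 2 := by rw [← hWlen]; exact s.isLt
          have ht : (t:ℕ) < M.length + 2 := by rw [← hWlen]; exact t.isLt
          simp only [List.get_eq_getElem]
          rcases Nat.eq_zero_or_pos (s:ℕ) with hs0 | hs1
          · simp only [hs0]
            rcases Nat.lt_or_ge (t:ℕ) (M.length + 1) with htM | htM
            · rw [hW0, hWmid t (by omega) (by omega)]
              rcases Nat.eq_zero_or_pos (p.length - 1 - (t:ℕ)) with he0 | he1
              · have hk0 : k = 0 := by omega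
                intro hadj
                refine (h00 hk0).1 ?_
                rw [getElem_congr_idx p he0.symm (by omega)]
                exact hHle hadj
              · intro hadj
                exact ML a (hK1'lo haK1) (p.length - 1 - (t:ℕ)) (by omega) he1 (hHle hadj)
            · have htt : (t:ℕ) = M.length + 1 := by omega
              simp only [htt]
              rw [hW0, hWlast]
              exact hHnadj haK1 hcK3
          · rcases Nat.lt_or_ge (t:ℕ) (M.length + 1) with htM | htM
            · rw [hWmid s hs1 (by omega), hWmid t (by omega) (by omega)]
              intro hadj
              exact hGnadj (p.length - 1 - (t:ℕ)) (p.length - 1 - (s:ℕ)) (by omega)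
                (by omega) (by omega) (hHle hadj).symm
            · have htt : (t:ℕ) = M.length + 1 := by omega
              simp only [htt]
              rw [hWmid s hs1 (by omega), hWlast]
              intro hadj
              exact hno (p.length - 1 - (s:ℕ)) (by omega) (by omega) (hHle hadj).symm
        have hWhead : W.head? = some a := by simp only [hW]; rfl
        have hWlastq : W.getLast? = some c := by
          simp only [hW, ← List.cons_append]
          exact List.getLast?_concat
        have hWint : ∀ w ∈ interior W, w ∈ L := by
          intro w hw
          have hiw : interior W = M := by
            simp only [hW]
            unfold interior
            rw [List.tail_cons, List.dropLast_concat]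
          rw [hiw, List.mem_iff_getElem] at hw
          obtain ⟨jj, hjjb, hjje⟩ := hw
          rw [hMget jj hjjb] at hjje
          rw [← hjje]
          exact hL3 (p.length - 2 - jj) (by omega) (by omega)
        obtain ⟨t, htW, htL, htcomp⟩ := hgp.cond3 W a c ⟨hWchain, hWnodup, hWchord⟩
          hWhead hWlastq haK1 hcK3 hWint
        simp only [hW, List.mem_cons, List.mem_append, List.mem_singleton, List.not_mem_nil, or_false] at htW
        rcases htW with rfl | htM | rfl
        · exact dK1L haK1 htL
        · rw [List.mem_iff_getElem] at htM
          obtain ⟨jj, hjjb, hjje⟩ := htM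
          rw [hMget jj hjjb] at hjje
          rcases Nat.eq_zero_or_pos (p.length - 2 - jj) with he0 | he1
          · have hk0 : k = 0 := by omega
            have htu : p[0]'h0lt = t := by
              rw [← hjje, getElem_congr_idx p he0 (by omega)]
            refine UBRANCH c hcK3 ?_ (by rw [htu]; exact htL) (by rw [htu]; exact htcomp)
            rw [getElem_congr_idx p hk0 h0lt] at hadjkc
            exact hadjkc
          · rcases Nat.lt_or_ge (p.length - 2 - jj) (p.length - 2) with heM | heM
            · refine ML bad (hK1'lo hbadK1) (p.length - 2 - jj) (by omega) he1 ?_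
              rw [hjje]
              exact (htcomp hbadK1).symm
            · have htv : t = v' := by
                rw [← hjje, getElem_congr_idx p (show p.length - 2 - jj = p.length - 2 by omega)
                  (by omega), hpv']
              have hbv : G.Adj v' bad := htv ▸ htcomp hbadK1
              exact hbadnv' hbv.symm
        · exact dK3L hcK3 htL
      -- now the case analysis choosing the endpoint of the path
      by_cases hexc3 : ∃ (e : ℕ) (he : e + 2 ≤ p.length), 1 ≤ e ∧ G.Adj c3 (p[e]'(by omega))
      · obtain ⟨e0, he0b, he01, he0adj⟩ := hexc3
        have hP0e0 : (fun jj => 1 ≤ jj ∧ ∃ h : jj + 2 ≤ p.length,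
            G.Adj c3 (p[jj]'(by omega))) e0 := ⟨he01, he0b, he0adj⟩
        have hspec := Nat.findGreatest_spec (P := fun jj => 1 ≤ jj ∧ ∃ h : jj + 2 ≤ p.length,
            G.Adj c3 (p[jj]'(by omega))) (m := e0) (n := p.length - 2) (by omega) hP0e0
        set i0 := Nat.findGreatest (fun jj => 1 ≤ jj ∧ ∃ h : jj + 2 ≤ p.length,
            G.Adj c3 (p[jj]'(by omega))) (p.length - 2) with hi0def
        obtain ⟨hi01, hi0b, hi0adj⟩ := hspec
        refine LP c3 i0 hc3K3 (by omega) hi0adj.symm ?_ ?_ (fun h => absurd h (by omega))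
        · intro jj hjj hlt hadj
          exact (Nat.findGreatest_is_greatest hlt (by omega)) ⟨by omega, hjj, hadj⟩
        · intro jj hjj hge
          exact hL'L (hintp jj (by omega) (by omega))
      · have hnoc3 : ∀ (jj : ℕ) (hjj : jj + 2 ≤ p.length), 1 ≤ jj →
            ¬ G.Adj c3 (p[jj]'(by omega)) := by
          intro jj hjj h1 hadj
          exact hexc3 ⟨jj, hjj, h1, hadj⟩
        by_cases huK3 : u ∈ K3
        · refine LP u 1 huK3 (by omega) ?_ ?_ ?_ (fun h => absurd h (by omega))
          · have hED := hedge 0 (by omega)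
            rw [hp0] at hED
            exact hED.symm
          · intro jj hjj hlt hadj
            refine hGnadj 0 jj (by omega) (by omega) (by omega) ?_
            rw [hp0]
            exact hadj
          · intro jj hjj h1
            exact hL'L (hintp jj (by omega) h1)
        · have huL : u ∈ L := by
            have hcov : u ∈ K1 ∪ K2 ∪ K3 ∪ L ∪ R := by
              rw [hgp.cover]; trivial
            have hnK1 : u ∉ K1 := fun h => (hK3'hi huK3').2 ((hframe.K1_sub h).1)
            have hnK2 : u ∉ K2 := by
              intro h
              rw [hframe.K2_eq] at h
              exact (hK3'hi huK3').2 h.1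
            have hnR : u ∉ R := by
              intro hR
              have h1 := hedge 0 (by omega)
              rw [hp0] at h1
              exact hgp.LR_anti (hL'L (hintp 1 (by omega) le_rfl)) hR h1.symm
            simp only [Set.mem_union] at hcov
            tauto
          have hunec3 : u ≠ c3 := fun h => huK3 (h ▸ hc3K3)
          have huc3 : G.Adj u c3 :=
            hframe.frame.Q3_cl huQ3 (hframe.K3_sub hc3K3).1 hunec3
          by_cases hau : G.Adj a u
          · have hW3 : IsChordlessPath (removeBetween G K1 K3) [a, u, c3] := by
              refine ⟨?_, ?_, ?_⟩
              · rw [show ∀ (R : V → V → Prop) l, List.Chain' R l ↔ List.IsChain R l from fun _ _ => Iff.rfl, List.isChain_cons_cons]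
                refine ⟨hHadj_of hau (Or.inr huL), ?_⟩
                simpa using hHadj_of huc3 (Or.inl huL)
              · have h1 : a ≠ u := fun h => dK1'K3' (hK1'lo haK1) (h ▸ huK3')
                have h2 : a ≠ c3 := fun h => dK1K3 haK1 (h ▸ hc3K3)
                simp [h1, h2, hunec3]
              · intro s t hstf
                have hs' : (s:ℕ) < 3 := by simpa using s.isLt
                have ht' : (t:ℕ) < 3 := by simpa using t.isLt
                have hsv : s = ⟨0, by simp⟩ := Fin.ext (show (s:ℕ) = 0 by omega)
                have htv : t = ⟨2, by simp⟩ := Fin.ext (show (t:ℕ) = 2 by omega)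
                subst hsv; subst htv
                exact hHnadj haK1 hc3K3
            obtain ⟨t, htW, htL, htcomp⟩ := hgp.cond3 [a, u, c3] a c3 hW3 rfl rfl haK1 hc3K3
              (by intro w hw; simp [interior] at hw; rw [hw]; exact huL)
            simp only [List.mem_cons, List.not_mem_nil, or_false] at htW
            rcases htW with rfl | rfl | rfl
            · exact dK1L haK1 htL
            · exact UBRANCH c3 hc3K3 (by rw [hp0]; exact huc3) (by rw [hp0]; exact huL)
                (by rw [hp0]; exact htcomp)
            · exact dK3L hc3K3 htL
          · refine LP c3 0 hc3K3 (by omega) (by rw [hp0]; exact huc3) ?_ ?_ ?_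
            · intro jj hjj hlt hadj
              exact hnoc3 jj hjj (by omega) hadj
            · intro jj hjj h0
              rcases Nat.eq_zero_or_pos jj with rfl | h1
              · rw [hp0]; exact huL
              · exact hL'L (hintp jj (by omega) h1)
            · intro h0
              refine ⟨by rw [hp0]; exact hau, fun h => hunec3 ?_⟩
              rw [hp0] at h
              exact h.symm
    refine ⟨?_, ?_⟩
    · intro hc1v'
      rw [Set.eq_empty_iff_forall_notMem]
      rintro w ⟨⟨hwK1', hwnv'⟩, hwK1⟩
      exact KEY c1 hc1K1 hc1v' w hwK1 (fun h => hwnv' h.symm)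
    · intro hnc1v'
      rw [Set.eq_empty_iff_forall_notMem]
      rintro w ⟨hwK1, hwadj⟩
      exact KEY w hwK1 hwadj.symm c1 hc1K1 hnc1v'
  · -- Part 2
    intro hcond3' hedge13' u huL' ⟨a, haK1', hua⟩ ⟨b', hb'K3', hub'⟩ b hbK3 hub
    -- there is an edge between K1' and K3'
    obtain ⟨e, heK1', f, hfK3', hef⟩ := hedge13'
    have hc1f : G.Adj c1 f := hc1.2 e heK1' f (hK3'hi hfK3') hef
    have hc3c1 : G.Adj c3 c1 := hc3.2 f hfK3' c1 (hK1'hi (hK1'lo hc1K1)) hc1f.symm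
    -- cond4 must hold in its second form
    have hloc : ∀ w ∈ L, ¬ ((∃ k ∈ K1, G.Adj w k) ∧ (∃ k ∈ K3, G.Adj w k)) := by
      rcases hgp.cond4 with hanti | hloc
      · exact absurd hc3c1.symm (hanti hc1K1 hc3K3)
      · exact hloc
    have hnoK1 : ¬ ∃ k ∈ K1, G.Adj u k := by
      intro hk
      exact hloc u (hL'L huL') ⟨hk, ⟨b, hbK3, hub⟩⟩
    have hnuc1 : ¬ G.Adj u c1 := fun h => hnoK1 ⟨c1, hc1K1, h⟩
    -- apply Cond3' to the path [a, u, b]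
    have hau' : a ≠ u := fun h => dK1'L' haK1' (h ▸ huL')
    have hub2 : u ≠ b := fun h => dK3'L' (hK3'lo hbK3) (h ▸ huL')
    have hab : a ≠ b := fun h => dK1'K3' haK1' (h ▸ hK3'lo hbK3)
    have hHadj_au : (removeBetween G K1' K3').Adj a u := by
      unfold removeBetween
      rw [SimpleGraph.deleteEdges_adj]
      refine ⟨hua.symm, ?_⟩
      rintro ⟨x1, hx1, y1, hy1, hse⟩
      rw [Sym2.eq_iff] at hse
      rcases hse with ⟨rfl, rfl⟩ | ⟨rfl, rfl⟩
      · exact dK3'L' hy1 huL'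
      · exact dK1'K3' haK1' hy1
    have hHadj_ub : (removeBetween G K1' K3').Adj u b := by
      unfold removeBetween
      rw [SimpleGraph.deleteEdges_adj]
      refine ⟨hub, ?_⟩
      rintro ⟨x1, hx1, y1, hy1, hse⟩
      rw [Sym2.eq_iff] at hse
      rcases hse with ⟨rfl, rfl⟩ | ⟨rfl, rfl⟩
      · exact dK1'L' hx1 huL'
      · exact dK1'K3' hx1 (hK3'lo hbK3)
    have hHnadj_ab : ¬ (removeBetween G K1' K3').Adj a b := by
      unfold removeBetween
      rw [SimpleGraph.deleteEdges_adj]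
      rintro ⟨-, hne⟩
      exact hne ⟨a, haK1', b, hK3'lo hbK3, rfl⟩
    have hcp : IsChordlessPath (removeBetween G K1' K3') [a, u, b] := by
      refine ⟨?_, ?_, ?_⟩
      · rw [show ∀ (R : V → V → Prop) l, List.Chain' R l ↔ List.IsChain R l from fun _ _ => Iff.rfl, List.isChain_cons_cons]
        exact ⟨hHadj_au, by simpa using hHadj_ub⟩
      · simp [hau', hab, hub2]
      · intro i j hij
        have hi' : (i : ℕ) < 3 := by simpa using i.isLt
        have hj' : (j : ℕ) < 3 := by simpa using j.isLt
        have hi : i = ⟨0, by simp⟩ := Fin.ext (show (i : ℕ) = 0 by omega)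
        have hj : j = ⟨2, by simp⟩ := Fin.ext (show (j : ℕ) = 2 by omega)
        subst hi; subst hj
        exact hHnadj_ab
    obtain ⟨t, htmem, htL', htcomp⟩ := hcond3' [a, u, b] a b hcp rfl rfl haK1' (hK3'lo hbK3)
      (by intro w hw; simp [interior] at hw; rw [hw]; exact huL')
    simp at htmem
    rcases htmem with rfl | rfl | rfl
    · exact dK1'L' haK1' htL'
    · exact hnuc1 (htcomp (hK1'lo hc1K1))
    · exact dK3'L' (hK3'lo hbK3) htL'

end Paper
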